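/- Let n ≥ 3 and let a, b, d, m be positive integers with b < a and d < m, and set r = m·a and s = d·b. Then, with q = R(n;a,b) - 1, we have R(n;r,s) > A_q(m,d). -/

import Mathlib

/-- `χ` is an `(r,s)`-set-coloring of the complete `k`-uniform hypergraph on `Fin N`:
each `k`-element edge receives a set of exactly `s` colors from the palette `Fin r`. -/
def IsSetColoring (N k r s : ℕ) (χ : Finset (Fin N) → Finset (Fin r)) : Prop :=
  ∀ e : Finset (Fin N), e.card = k → (χ e).card = s

/-- There is a monochromatic `n`-clique: `n` vertices all of whose `k`-element
subsets share a common color. -/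
def HasMonoClique (N k n r : ℕ) (χ : Finset (Fin N) → Finset (Fin r)) : Prop :=
  ∃ S : Finset (Fin N), S.card = n ∧ ∃ c : Fin r, ∀ e ⊆ S, e.card = k → c ∈ χ e

/-- The `k`-uniform set-coloring Ramsey number `R_k(n;r,s)`. -/
noncomputable def setRamsey (k n r s : ℕ) : ℕ :=
  sInf {N | ∀ χ : Finset (Fin N) → Finset (Fin r),
    IsSetColoring N k r s χ → HasMonoClique N k n r χ}

/-- `A_q(m,d)`: the maximum size of a `q`-ary code of length `m` with minimum
Hamming distance at least `d`. -/
noncomputable def maxCode (q m d : ℕ) : ℕ :=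
  sSup {M | ∃ C : Finset (Fin m → Fin q),
    (∀ x ∈ C, ∀ y ∈ C, x ≠ y → d ≤ hammingDist x y) ∧ C.card = M}

/-- The graph on `Fin N` formed by the edges whose color set contains `i`. -/
def colorGraph (N r : ℕ) (χ : Finset (Fin N) → Finset (Fin r)) (i : Fin r) :
    SimpleGraph (Fin N) where
  Adj u v := u ≠ v ∧ i ∈ χ {u, v}
  symm := by
    constructor
    intro u v h
    exact ⟨h.1.symm, by rw [Finset.pair_comm]; exact h.2⟩
  loopless := by constructor; intro u h; exact h.1 rfl

/-- `R'(n;r,s)`: the least `N` such that every `(r,s)`-coloring of `K_N` has a color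
class with chromatic number at least `n`. -/
noncomputable def setRamsey' (n r s : ℕ) : ℕ :=
  sInf {N | ∀ χ : Finset (Fin N) → Finset (Fin r), IsSetColoring N 2 r s χ →
    ∃ i : Fin r, (n : ℕ∞) ≤ (colorGraph N r χ i).chromaticNumber}

/-- The Turán number `ex(N, K_n)`. -/
noncomputable def turanNumber (N n : ℕ) : ℕ :=
  sSup {m | ∃ G : SimpleGraph (Fin N), G.CliqueFree n ∧ G.edgeSet.ncard = m}


lemma greedy {V : Type*} [DecidableEq V] {r : ℕ} (g : V → V → Fin r) :
    ∀ (t : ℕ) (S : Finset V), (r+1)^t ≤ S.card →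
    ∃ l : List (V × Fin r), l.length = t ∧ (∀ p ∈ l, p.1 ∈ S) ∧
      l.Pairwise (fun p q => p.1 ≠ q.1 ∧ g p.1 q.1 = p.2) := by
  classical
  intro t
  induction t with
  | zero => intro S _; exact ⟨[], rfl, by simp, List.Pairwise.nil⟩
  | succ t ih =>
    intro S hS
    have h1 : 1 ≤ S.card := le_trans (Nat.one_le_pow _ _ (Nat.succ_pos r)) hS
    obtain ⟨v, hv⟩ := Finset.card_pos.mp h1
    rcases Nat.eq_zero_or_pos r with hr | hr
    · subst hr; exact (g v v).elim0
    have hsum : (S.erase v).card = ∑ c : Fin r, ((S.erase v).filter (fun w => g v w = c)).card :=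
      Finset.card_eq_sum_card_fiberwise (fun x _ => Finset.mem_univ _)
    have hbig : ∃ c : Fin r, (r+1)^t ≤ ((S.erase v).filter (fun w => g v w = c)).card := by
      by_contra hcon
      push_neg at hcon
      have hle : ∀ c : Fin r, ((S.erase v).filter (fun w => g v w = c)).card + 1 ≤ (r+1)^t :=
        fun c => hcon c
      have h2 : (S.erase v).card + r ≤ r * (r+1)^t := by
        calc (S.erase v).card + r
            = ∑ c : Fin r, (((S.erase v).filter (fun w => g v w = c)).card + 1) := by
              rw [Finset.sum_add_distrib, ← hsum]; simp
          _ ≤ ∑ _c : Fin r, (r+1)^t := Finset.sum_le_sum (fun c _ => hle c)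
          _ = r * (r+1)^t := by simp [Finset.sum_const, mul_comm]
      have h3 : (r+1)^(t+1) = r * (r+1)^t + (r+1)^t := by ring
      have h4 : (S.erase v).card = S.card - 1 := Finset.card_erase_of_mem hv
      have h5 : 1 ≤ (r+1)^t := Nat.one_le_pow _ _ (Nat.succ_pos r)
      omega
    obtain ⟨c, hc⟩ := hbig
    obtain ⟨l, hlen, hmem, hpw⟩ := ih _ hc
    refine ⟨(v, c) :: l, by simp [hlen], ?_, List.Pairwise.cons ?_ hpw⟩
    · intro p hp
      rcases List.mem_cons.mp hp with h | h
      · subst h; exact hv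
      · exact Finset.mem_of_mem_erase (Finset.mem_of_mem_filter _ (hmem p h))
    · intro q hq
      have := hmem q hq
      simp only [Finset.mem_filter, Finset.mem_erase] at this
      exact ⟨fun h => this.1.1 h.symm, this.2⟩

lemma ramsey_exists' (n r s : ℕ) (hs : 1 ≤ s) (hr : 1 ≤ r) :
    ∃ N, ∀ χ : Finset (Fin N) → Finset (Fin r),
      IsSetColoring N 2 r s χ → HasMonoClique N 2 n r χ := by
  classical
  refine ⟨(r+1)^(r * n + 1), ?_⟩
  intro χ hχ
  have hne : ∀ u v : Fin ((r+1)^(r * n + 1)), u ≠ v → (χ {u, v}).Nonempty := by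
    intro u v huv
    have h2 := hχ {u, v} (Finset.card_pair huv)
    rw [← Finset.card_pos, h2]; exact hs
  set g : Fin ((r+1)^(r * n + 1)) → Fin ((r+1)^(r * n + 1)) → Fin r := fun u v =>
    if h : (χ {u, v}).Nonempty then h.choose else ⟨0, hr⟩ with hg
  have hgmem : ∀ u v, u ≠ v → g u v ∈ χ {u, v} := by
    intro u v huv
    have h := hne u v huv
    simp only [hg, dif_pos h]
    exact h.choose_spec
  obtain ⟨l, hlen, -, hpw⟩ := greedy g (r * n + 1) Finset.univ (by simp)
  set vert : Fin (r * n + 1) → Fin ((r+1)^(r * n + 1)) :=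
    fun i => (l.get (Fin.cast hlen.symm i)).1 with hvert
  set col : Fin (r * n + 1) → Fin r := fun i => (l.get (Fin.cast hlen.symm i)).2 with hcol
  have hpg := List.pairwise_iff_get.mp hpw
  have key : ∀ i j : Fin (r * n + 1), i < j → vert i ≠ vert j ∧ g (vert i) (vert j) = col i :=
    fun i j hij => hpg (Fin.cast hlen.symm i) (Fin.cast hlen.symm j) hij
  obtain ⟨y, hy⟩ := Fintype.exists_lt_card_fiber_of_mul_lt_card col
    (by simp only [Fintype.card_fin]; omega : Fintype.card (Fin r) * n < Fintype.card (Fin (r * n + 1)))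
  obtain ⟨J, hJsub, hJcard⟩ := Finset.exists_subset_card_eq (le_of_lt hy)
  have hJcol : ∀ i ∈ J, col i = y := by
    intro i hi
    have h3 := hJsub hi
    simp only [Finset.mem_filter] at h3
    exact h3.2
  have hkey2 : ∀ i ∈ J, ∀ j ∈ J, i ≠ j → vert i ≠ vert j ∧ y ∈ χ {vert i, vert j} := by
    intro i hi j hj hij
    rcases lt_or_gt_of_ne hij with h | h
    · obtain ⟨h1, h2⟩ := key i j h
      exact ⟨h1, by rw [← hJcol i hi, ← h2]; exact hgmem _ _ h1⟩
    · obtain ⟨h1, h2⟩ := key j i h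
      refine ⟨fun hh => h1 hh.symm, ?_⟩
      rw [Finset.pair_comm, ← hJcol j hj, ← h2]
      exact hgmem _ _ h1
  refine ⟨J.image vert, ?_, y, ?_⟩
  · rw [Finset.card_image_of_injOn, hJcard]
    intro i hi j hj hij
    by_contra hne'
    exact (hkey2 i hi j hj hne').1 hij
  · intro e he hcard
    obtain ⟨x, z, hxz, rfl⟩ := Finset.card_eq_two.mp hcard
    have hx : x ∈ J.image vert := he (Finset.mem_insert_self x {z})
    have hz : z ∈ J.image vert := he (by simp)
    obtain ⟨i, hi, hix⟩ := Finset.mem_image.mp hx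
    obtain ⟨j, hj, hjz⟩ := Finset.mem_image.mp hz
    have hij : i ≠ j := by rintro rfl; exact hxz (hix ▸ hjz ▸ rfl)
    have h4 := (hkey2 i hi j hj hij).2
    rwa [hix, hjz] at h4

lemma restrict_bad {r s n N M : ℕ} (h : N ≤ M)
    (χ : Finset (Fin M) → Finset (Fin r)) (h1 : IsSetColoring M 2 r s χ)
    (h2 : ¬ HasMonoClique M 2 n r χ) :
    ∃ χ' : Finset (Fin N) → Finset (Fin r),
      IsSetColoring N 2 r s χ' ∧ ¬ HasMonoClique N 2 n r χ' := by
  refine ⟨fun e => χ (e.map (Fin.castLEEmb h)), ?_, ?_⟩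
  · intro e he
    exact h1 _ (by rw [Finset.card_map]; exact he)
  · rintro ⟨S, hS, c, hc⟩
    refine h2 ⟨S.map (Fin.castLEEmb h), by rw [Finset.card_map]; exact hS, c, ?_⟩
    intro e he hcard
    obtain ⟨e₀, he₀, rfl⟩ := Finset.subset_map_iff.mp he
    exact hc e₀ he₀ (by rwa [Finset.card_map] at hcard)

lemma construct_bad (n a b d m q : ℕ) (hb : 1 ≤ b) (hd : 1 ≤ d)
    (χ₀ : Finset (Fin q) → Finset (Fin a))
    (h0 : IsSetColoring q 2 a b χ₀) (h1 : ¬ HasMonoClique q 2 n a χ₀)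
    (M : ℕ) (f : Fin M → (Fin m → Fin q))
    (hfinj : Function.Injective f)
    (hf : ∀ i j, i ≠ j → d ≤ hammingDist (f i) (f j)) :
    ∃ χ : Finset (Fin M) → Finset (Fin (m * a)),
      IsSetColoring M 2 (m * a) (d * b) χ ∧ ¬ HasMonoClique M 2 n (m * a) χ := by
  classical
  set E : Fin m × Fin a ≃ Fin (m * a) := finProdFinEquiv with hE
  set avail : Finset (Fin M) → Finset (Fin (m * a)) := fun e =>
    Finset.univ.filter (fun p => ∃ u ∈ e, ∃ v ∈ e,
      f u (E.symm p).1 ≠ f v (E.symm p).1 ∧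
      (E.symm p).2 ∈ χ₀ {f u (E.symm p).1, f v (E.symm p).1}) with havail
  have hcard : ∀ e : Finset (Fin M), e.card = 2 → d * b ≤ (avail e).card := by
    intro e he
    obtain ⟨u, v, huv, rfl⟩ := Finset.card_eq_two.mp he
    set B : Finset (Fin m) := Finset.univ.filter (fun j => f u j ≠ f v j) with hB
    have hdB : d ≤ B.card := by
      have := hf u v huv
      rwa [hammingDist, ← hB] at this
    have hIemb : ∀ j : Fin m, Function.Injective (fun c : Fin a => E (j, c)) := by
      intro j c1 c2 hc
      have := E.injective hc
      exact (Prod.mk.injEq _ _ _ _ ▸ this).2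
    set W : Finset (Fin (m * a)) :=
      B.biUnion (fun j => (χ₀ {f u j, f v j}).map ⟨fun c => E (j, c), hIemb j⟩) with hW
    have hWsub : W ⊆ avail {u, v} := by
      intro p hp
      simp only [hW, Finset.mem_biUnion, Finset.mem_map, Function.Embedding.coeFn_mk] at hp
      obtain ⟨j, hj, c, hc, rfl⟩ := hp
      simp only [havail, Finset.mem_filter, Finset.mem_univ, true_and]
      refine ⟨u, by simp, v, by simp, ?_, ?_⟩
      · rw [Equiv.symm_apply_apply]
        exact (Finset.mem_filter.mp hj).2
      · rw [Equiv.symm_apply_apply]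
        exact hc
    have hWcard : d * b ≤ W.card := by
      rw [hW, Finset.card_biUnion]
      · have : ∀ j ∈ B, ((χ₀ {f u j, f v j}).map ⟨fun c => E (j, c), hIemb j⟩).card = b := by
          intro j hj
          rw [Finset.card_map]
          exact h0 _ (Finset.card_pair (Finset.mem_filter.mp hj).2)
        rw [Finset.sum_congr rfl this, Finset.sum_const, smul_eq_mul]
        exact Nat.mul_le_mul_right b hdB
      · intro j1 h1' j2 h2' hne
        simp only [Finset.disjoint_left, Finset.mem_map, Function.Embedding.coeFn_mk]
        rintro p ⟨c1, _, rfl⟩ ⟨c2, _, hc2⟩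
        exact hne (congrArg Prod.fst (E.injective hc2)).symm
    exact le_trans hWcard (Finset.card_le_card hWsub)
  set χ : Finset (Fin M) → Finset (Fin (m * a)) := fun e =>
    if h : d * b ≤ (avail e).card then (Finset.exists_subset_card_eq h).choose else ∅ with hχ
  have hsub : ∀ e, χ e ⊆ avail e := by
    intro e
    simp only [hχ]
    split
    · exact (Finset.exists_subset_card_eq (by assumption)).choose_spec.1
    · exact Finset.empty_subset _
  refine ⟨χ, ?_, ?_⟩
  · intro e he
    simp only [hχ, dif_pos (hcard e he)]
    exact (Finset.exists_subset_card_eq (hcard e he)).choose_spec.2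
  · rintro ⟨S, hS, p, hp⟩
    set j := (E.symm p).1
    set c := (E.symm p).2
    have key : ∀ u ∈ S, ∀ v ∈ S, u ≠ v → f u j ≠ f v j ∧ c ∈ χ₀ {f u j, f v j} := by
      intro u hu v hv huv
      have hpe : p ∈ avail {u, v} :=
        hsub _ (hp {u, v} (Finset.insert_subset hu (Finset.singleton_subset_iff.mpr hv))
          (Finset.card_pair huv))
      simp only [havail, Finset.mem_filter, Finset.mem_univ, true_and] at hpe
      obtain ⟨u', hu', v', hv', hne', hmem'⟩ := hpe
      simp only [Finset.mem_insert, Finset.mem_singleton] at hu' hv'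
      rcases hu' with rfl | rfl <;> rcases hv' with rfl | rfl
      · exact absurd rfl hne'
      · exact ⟨hne', hmem'⟩
      · exact ⟨hne'.symm, by rwa [Finset.pair_comm] at hmem'⟩
      · exact absurd rfl hne'
    have hinj : Set.InjOn (fun v => f v j) S := by
      intro x hx y hy hxy
      by_contra hne'
      exact (key x hx y hy hne').1 hxy
    refine h1 ⟨S.image (fun v => f v j), by rw [Finset.card_image_of_injOn hinj]; exact hS, c, ?_⟩
    intro e' he' hcard'
    obtain ⟨x, z, hxz, rfl⟩ := Finset.card_eq_two.mp hcard'
    have hx : x ∈ S.image (fun v => f v j) := he' (Finset.mem_insert_self x {z})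
    have hz : z ∈ S.image (fun v => f v j) := he' (by simp)
    obtain ⟨u, hu, hux⟩ := Finset.mem_image.mp hx
    obtain ⟨v, hv, hvz⟩ := Finset.mem_image.mp hz
    have huv : u ≠ v := by rintro rfl; exact hxz (hux ▸ hvz ▸ rfl)
    have h5 := (key u hu v hv huv).2
    rwa [hux, hvz] at h5


/-- Theorem 2: the product/code lower bound for set-coloring Ramsey numbers. -/
theorem set_ramsey_gt_maxCode (n a b d m : ℕ) (hn : 3 ≤ n) (hb : 1 ≤ b) (hba : b < a)
    (hd : 1 ≤ d) (hdm : d < m) (r s : ℕ) (hr : r = m * a) (hs : s = d * b) :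
    maxCode (setRamsey 2 n a b - 1) m d < setRamsey 2 n r s := by
  classical
  subst hr hs
  set q := setRamsey 2 n a b - 1 with hq
  set M := maxCode q m d with hM
  -- produce a bad coloring on `Fin M`
  have hbad : ∃ χ : Finset (Fin M) → Finset (Fin (m * a)),
      IsSetColoring M 2 (m * a) (d * b) χ ∧ ¬ HasMonoClique M 2 n (m * a) χ := by
    rcases Nat.eq_zero_or_pos q with hq0 | hq0
    · -- q = 0 : the code is empty, M = 0
      have hM0 : M = 0 := by
        rw [hM, maxCode]
        have him : IsEmpty (Fin m → Fin q) := by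
          rw [hq0]
          exact ⟨fun g => (g ⟨0, by omega⟩).elim0⟩
        apply Nat.le_zero.mp
        have hne' : ({M' | ∃ C : Finset (Fin m → Fin q),
            (∀ x ∈ C, ∀ y ∈ C, x ≠ y → d ≤ hammingDist x y) ∧ C.card = M'} : Set ℕ).Nonempty :=
          ⟨0, ∅, by simp, by simp⟩
        apply csSup_le hne'
        rintro x ⟨C, -, hC⟩
        have : C = ∅ := Finset.eq_empty_of_isEmpty C
        simp [this] at hC
        omega
      rw [hM0]
      refine ⟨fun _ => ∅, ?_, ?_⟩
      · intro e he
        have : e = ∅ := Finset.eq_empty_of_isEmpty e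
        rw [this] at he
        simp at he
      · rintro ⟨S, hS, -⟩
        have : S = ∅ := Finset.eq_empty_of_isEmpty S
        rw [this] at hS
        simp at hS
        omega
    · -- q ≥ 1 : get a bad (a,b)-coloring of K_q
      have hqnot : q ∉ {N | ∀ χ : Finset (Fin N) → Finset (Fin a),
          IsSetColoring N 2 a b χ → HasMonoClique N 2 n a χ} := by
        intro hmem
        have h1 := Nat.sInf_le hmem
        have h2 : setRamsey 2 n a b = sInf _ := rfl
        omega
      simp only [Set.mem_setOf_eq, not_forall] at hqnot
      obtain ⟨χ₀, h0, h1⟩ := hqnot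
      -- get an optimal code
      have hTne : ({M' | ∃ C : Finset (Fin m → Fin q),
          (∀ x ∈ C, ∀ y ∈ C, x ≠ y → d ≤ hammingDist x y) ∧ C.card = M'} : Set ℕ).Nonempty :=
        ⟨0, ∅, by simp, by simp⟩
      have hTbdd : BddAbove {M' | ∃ C : Finset (Fin m → Fin q),
          (∀ x ∈ C, ∀ y ∈ C, x ≠ y → d ≤ hammingDist x y) ∧ C.card = M'} := by
        refine ⟨Fintype.card (Fin m → Fin q), ?_⟩
        rintro x ⟨C, -, hC⟩
        rw [← hC]
        exact Finset.card_le_univ C |>.trans (le_of_eq (Finset.card_univ))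
      obtain ⟨C, hCdist, hCcard⟩ := Nat.sSup_mem hTne hTbdd
      set f : Fin M → (Fin m → Fin q) :=
        fun i => ↑(C.equivFin.symm (Fin.cast hCcard.symm i)) with hf
      have hfinj : Function.Injective f := by
        intro i j hij
        have h2 : C.equivFin.symm (Fin.cast hCcard.symm i) =
            C.equivFin.symm (Fin.cast hCcard.symm j) := Subtype.ext hij
        have h3 := C.equivFin.symm.injective h2
        exact Fin.ext (by have h4 := congrArg Fin.val h3; exact h4)
      have hfd : ∀ i j : Fin M, i ≠ j → d ≤ hammingDist (f i) (f j) := by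
        intro i j hij
        exact hCdist _ (Subtype.coe_prop _) _ (Subtype.coe_prop _) (fun h => hij (hfinj h))
      exact construct_bad n a b d m q hb hd χ₀ h0 h1 M f hfinj hfd
  obtain ⟨χ, hχ1, hχ2⟩ := hbad
  -- conclude
  have hs1 : 1 ≤ d * b := Nat.one_le_iff_ne_zero.mpr (by positivity)
  have hr1 : 1 ≤ m * a := by nlinarith
  obtain ⟨N₀, hN₀⟩ := ramsey_exists' n (m * a) (d * b) hs1 hr1
  by_contra hcon
  push_neg at hcon
  have hmem : setRamsey 2 n (m * a) (d * b) ∈ {N | ∀ χ : Finset (Fin N) → Finset (Fin (m * a)),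
      IsSetColoring N 2 (m * a) (d * b) χ → HasMonoClique N 2 n (m * a) χ} :=
    Nat.sInf_mem ⟨N₀, hN₀⟩
  obtain ⟨χ', hχ'1, hχ'2⟩ := restrict_bad hcon χ hχ1 hχ2
  exact hχ'2 (hmem χ' hχ'1)
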